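/- When d is odd, every operator L_p fixes the covector h*: one has (h*)^T L_p = (h*)^T, where h* = Σ_p (-1)^{σ(p)} e_p is a generator of the kernel of Ω. Consequently every element of the group generated by the L_p fixes this covector. -/
import Mathlib


open Matrix

/-- The matrix of the operator `L_p`:
`L_p e_q = e_q` for `q ≠ p` and `L_p e_p = -Σ_{r<p} e_r + Σ_{r≥p} e_r`. -/
def L (d : ℕ) (p : Fin d) : Matrix (Fin d) (Fin d) ℤ :=
  Matrix.of fun r q => if q = p then (if r < p then -1 else 1) else (if r = q then 1 else 0)

/-- The alternating covector `h* = Σ_p (-1)^p e_p` (a generator of the kernel of `Ω`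
when `d` is odd). -/
def hstar (d : ℕ) : Fin d → ℤ := fun p => (-1) ^ (p : ℕ)

/-- For `d` odd, every operator `L_p` fixes the covector `h*`: `(h*)ᵀ L_p = (h*)ᵀ`.
Consequently every element of the group generated by the `L_p` fixes this covector. -/
theorem hstar_fixed (d : ℕ) (hd : 3 ≤ d) (ho : Odd d) :
    (∀ p : Fin d, Matrix.vecMul (hstar d) (L d p) = hstar d) ∧
    (∀ B ∈ Subgroup.closure {u : (Matrix (Fin d) (Fin d) ℤ)ˣ | ∃ p : Fin d, (u : Matrix (Fin d) (Fin d) ℤ) = L d p},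
      Matrix.vecMul (hstar d) (B : Matrix (Fin d) (Fin d) ℤ) = hstar d) := by
  have key : ∀ p : Fin d, Matrix.vecMul (hstar d) (L d p) = hstar d := by
    intro p
    funext q
    simp only [Matrix.vecMul, dotProduct, L, hstar, Matrix.of_apply]
    by_cases hq : q = p
    · subst hq
      simp only [eq_self_iff_true, if_true]
      have h1 : ∀ r : Fin d,
          (-1 : ℤ) ^ (r : ℕ) * (if r < q then -1 else 1)
            = (-1) ^ (r : ℕ) - 2 * (if (r : ℕ) < (q : ℕ) then (-1) ^ (r : ℕ) else 0) := by
        intro r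
        by_cases h : (r : ℕ) < (q : ℕ) <;> simp [Fin.lt_def, h] <;> ring
      rw [Finset.sum_congr rfl fun r _ => h1 r, Finset.sum_sub_distrib, ← Finset.mul_sum]
      have h2 : (∑ r : Fin d, (if (r : ℕ) < (q : ℕ) then ((-1 : ℤ)) ^ (r : ℕ) else 0))
          = ∑ r ∈ Finset.range (q : ℕ), (-1 : ℤ) ^ r := by
        rw [Fin.sum_univ_eq_sum_range (fun n => if n < (q : ℕ) then ((-1 : ℤ)) ^ n else 0)]
        rw [← Finset.sum_filter]
        congr 1
        ext r
        simp only [Finset.mem_filter, Finset.mem_range]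
        constructor
        · rintro ⟨_, h⟩; exact h
        · intro h; exact ⟨h.trans_le q.2.le, h⟩
      have h3 : (∑ r : Fin d, ((-1 : ℤ)) ^ (r : ℕ)) = ∑ r ∈ Finset.range d, (-1 : ℤ) ^ r :=
        Fin.sum_univ_eq_sum_range (fun n => ((-1 : ℤ)) ^ n) d
      rw [h2, h3, neg_one_geom_sum, neg_one_geom_sum]
      rw [if_neg (Nat.not_even_iff_odd.mpr ho)]
      rcases Nat.even_or_odd (q : ℕ) with he | hodd
      · rw [if_pos he, he.neg_one_pow]; ring
      · rw [if_neg (Nat.not_even_iff_odd.mpr hodd), hodd.neg_one_pow]; ring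
    · simp only [if_neg hq]
      rw [Finset.sum_eq_single q]
      · simp
      · intro r _ hr; simp [hr]
      · simp
  refine ⟨key, ?_⟩
  intro B hB
  induction hB using Subgroup.closure_induction with
  | mem x hx =>
    obtain ⟨p, hp⟩ := hx
    rw [hp]; exact key p
  | one => simp
  | mul x y hx hy ihx ihy =>
    simp only [Units.val_mul, ← Matrix.vecMul_vecMul, ihx, ihy]
  | inv x hx ih =>
    have : Matrix.vecMul (hstar d) ((x : Matrix (Fin d) (Fin d) ℤ) * ((x⁻¹ : (Matrix (Fin d) (Fin d) ℤ)ˣ) : Matrix (Fin d) (Fin d) ℤ)) = hstar d := by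
      rw [← Units.val_mul, mul_inv_cancel]; simp
    rw [← Matrix.vecMul_vecMul, ih] at this
    exact this
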